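/- arXiv:2406.16378 — 4 statements merged into one kernel-verified Lean document; each statement's English description precedes it below -/
import Mathlib

section
/- Let E be a real uniformly convex Banach space and let a, b be real numbers with 0 < a < b < 1. Let (t_n) be a sequence of real numbers with t_n ∈ [a, b] for all n, and let (w_n), (y_n) be sequences in E with ‖w_n‖ ≤ 1 and ‖y_n‖ ≤ 1 for all n. Define z_n := (1 − t_n) • w_n + t_n • y_n. If lim_{n→∞} ‖z_n‖ = 1, then lim_{n→∞} ‖w_n − y_n‖ = 0. -/
/-- Dotson's Lemma 3: in a real uniformly convex Banach space, if `‖wₙ‖ ≤ 1`,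
`‖yₙ‖ ≤ 1`, `tₙ ∈ [a, b] ⊂ (0, 1)` and `‖(1 - tₙ) • wₙ + tₙ • yₙ‖ → 1`,
then `‖wₙ - yₙ‖ → 0`. -/
theorem dotson_lemma {E : Type*} [NormedAddCommGroup E] [NormedSpace ℝ E]
    [CompleteSpace E] [UniformConvexSpace E]
    (a b : ℝ) (ha : 0 < a) (hab : a < b) (hb : b < 1)
    (t : ℕ → ℝ) (ht : ∀ n, t n ∈ Set.Icc a b)
    (w y : ℕ → E) (hw : ∀ n, ‖w n‖ ≤ 1) (hy : ∀ n, ‖y n‖ ≤ 1)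
    (z : ℕ → E) (hz : ∀ n, z n = (1 - t n) • w n + t n • y n)
    (hlim : Filter.Tendsto (fun n => ‖z n‖) Filter.atTop (nhds 1)) :
    Filter.Tendsto (fun n => ‖w n - y n‖) Filter.atTop (nhds 0) := by
  rw [Metric.tendsto_atTop]
  intro ε hε
  obtain ⟨δ, hδ, H⟩ := exists_forall_closed_ball_dist_add_le_two_sub E hε
  set c : ℝ := min a (1 - b) with hc
  have hc0 : 0 < c := lt_min ha (by linarith)
  have hcδ : 0 < c * δ := mul_pos hc0 hδ
  rw [Metric.tendsto_atTop] at hlim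
  obtain ⟨N, hN⟩ := hlim (c * δ) hcδ
  refine ⟨N, fun n hn => ?_⟩
  rw [Real.dist_eq, sub_zero, abs_of_nonneg (norm_nonneg _)]
  by_contra hcon
  push_neg at hcon
  have hH : ‖w n + y n‖ ≤ 2 - δ := H (hw n) (hy n) hcon
  obtain ⟨hta, htb⟩ := ht n
  have hzle : ‖z n‖ ≤ 1 - c * δ := by
    rcases le_or_gt (t n) (1/2) with h2 | h2
    · have heq : z n = (1 - 2 * t n) • w n + (t n) • (w n + y n) := by
        rw [hz n, smul_add]
        module
      calc ‖z n‖ ≤ ‖(1 - 2 * t n) • w n‖ + ‖(t n) • (w n + y n)‖ := by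
            rw [heq]; exact norm_add_le _ _
        _ = |1 - 2 * t n| * ‖w n‖ + |t n| * ‖w n + y n‖ := by
            rw [norm_smul, norm_smul, Real.norm_eq_abs, Real.norm_eq_abs]
        _ ≤ (1 - 2 * t n) * 1 + t n * (2 - δ) := by
            rw [abs_of_nonneg (by linarith), abs_of_nonneg (by linarith)]
            have h1 : ‖w n‖ ≤ 1 := hw n
            have h2 : ‖w n + y n‖ ≤ 2 - δ := hH
            nlinarith [norm_nonneg (w n), norm_nonneg (w n + y n)]
        _ = 1 - t n * δ := by ring
        _ ≤ 1 - c * δ := by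
            have : c ≤ t n := le_trans (min_le_left _ _) hta
            nlinarith
    · have heq : z n = (2 * t n - 1) • y n + (1 - t n) • (w n + y n) := by
        rw [hz n, smul_add]
        module
      calc ‖z n‖ ≤ ‖(2 * t n - 1) • y n‖ + ‖(1 - t n) • (w n + y n)‖ := by
            rw [heq]; exact norm_add_le _ _
        _ = |2 * t n - 1| * ‖y n‖ + |1 - t n| * ‖w n + y n‖ := by
            rw [norm_smul, norm_smul, Real.norm_eq_abs, Real.norm_eq_abs]
        _ ≤ (2 * t n - 1) * 1 + (1 - t n) * (2 - δ) := by
            rw [abs_of_nonneg (by linarith), abs_of_nonneg (by linarith)]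
            have h1 : ‖y n‖ ≤ 1 := hy n
            have h2 : ‖w n + y n‖ ≤ 2 - δ := hH
            nlinarith [norm_nonneg (y n), norm_nonneg (w n + y n)]
        _ = 1 - (1 - t n) * δ := by ring
        _ ≤ 1 - c * δ := by
            have : c ≤ 1 - t n := le_trans (min_le_right _ _) (by linarith)
            nlinarith
  have := hN n hn
  rw [Real.dist_eq] at this
  have : ‖z n‖ > 1 - c * δ := by
    cases abs_lt.mp this; linarith
  linarith
end

section
/- There exist a sequence (t_n) of real numbers with t_n ∈ (0, 1) for all n, sequences (a_n), (b_n) of real numbers, and m ≥ 0, such that limsup_{n→∞} |a_n| ≤ m, limsup_{n→∞} |b_n| ≤ m, lim_{n→∞} |(1 − t_n) a_n + t_n b_n| = m, and yet |a_n − b_n| does not tend to 0 as n → ∞. (Since ℝ with the absolute value is a uniformly convex Banach space, the variant of Schu's lemma stated with coefficients only in (0,1) is false.) -/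
/-- The variant of Schu's lemma with coefficients only in `(0, 1)` fails even
in `ℝ`. -/
theorem counterexample_open_coeffs :
    ∃ (t a b : ℕ → ℝ) (m : ℝ), 0 ≤ m ∧ (∀ n, t n ∈ Set.Ioo (0 : ℝ) 1) ∧
      Filter.limsup (fun n => |a n|) Filter.atTop ≤ m ∧
      Filter.limsup (fun n => |b n|) Filter.atTop ≤ m ∧
      Filter.Tendsto (fun n => |(1 - t n) * a n + t n * b n|)
        Filter.atTop (nhds m) ∧
      ¬ Filter.Tendsto (fun n => |a n - b n|) Filter.atTop (nhds 0) := by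
  refine ⟨fun n => 1 / (n + 2), fun _ => 1, fun _ => -1, 1, zero_le_one, ?_, ?_, ?_, ?_, ?_⟩
  · intro n
    constructor
    · positivity
    · rw [div_lt_one (by positivity)]
      have : (0:ℝ) ≤ n := Nat.cast_nonneg n
      linarith
  · simp
  · simp
  · have h1 : Filter.Tendsto (fun n : ℕ => 1 / ((n:ℝ) + 2)) Filter.atTop (nhds 0) := by
      have := Filter.Tendsto.comp (tendsto_one_div_add_atTop_nhds_zero_nat (𝕜 := ℝ)) (Filter.tendsto_add_atTop_nat 1)
      convert this using 2 with n
      simp [Function.comp]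
      push_cast
      ring
    have h2 : Filter.Tendsto (fun n : ℕ => |1 - 2 * (1 / ((n:ℝ) + 2))|) Filter.atTop (nhds 1) := by
      have := ((h1.const_mul 2).const_sub 1).abs
      simpa using this
    convert h2 using 2 with n
    ring
  · intro h
    have : Filter.Tendsto (fun _ : ℕ => (2:ℝ)) Filter.atTop (nhds 0) := by
      convert h using 2 with n
      norm_num
    have := tendsto_nhds_unique this tendsto_const_nhds
    norm_num at this
end

section
/- Let X be a real normed vector space and x ∈ X with ‖x‖ = 1, and let λ ∈ (0, 1). Define x_n := x for all n ≥ 1, y_n := 0 for even n and y_n := x for odd n, and t_n := λ for all n. Then limsup_{n→∞} ‖x_n‖ = 1, limsup_{n→∞} ‖y_n‖ = 1, limsup_{n→∞} ‖t_n • x_n + (1 − t_n) • y_n‖ = 1, and the sequence (‖x_n − y_n‖) does not converge to 0. -/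
open Filter

lemma limsup_eq_one_aux (f : ℕ → ℝ) (hle : ∀ n, f n ≤ 1)
    (hfreq : ∀ n, f (2 * n + 1) = 1) :
    Filter.limsup f Filter.atTop = 1 := by
  apply le_antisymm
  · apply Filter.limsup_le_of_le
    · apply Filter.IsCoboundedUnder.of_frequently_ge (a := 1)
      rw [Filter.frequently_atTop]
      intro a
      exact ⟨2 * a + 1, by omega, (hfreq a).ge⟩
    · exact Filter.Eventually.of_forall hle
  · apply Filter.le_limsup_of_frequently_le
    · rw [Filter.frequently_atTop]
      intro a
      exact ⟨2 * a + 1, by omega, (hfreq a).ge⟩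
    · exact ⟨1, Filter.eventually_map.mpr (Filter.Eventually.of_forall hle)⟩

/-- Example 2 of the paper: replacing `lim` by `limsup` in the third
hypothesis of Schu's lemma gives a false statement. -/
theorem example_two {X : Type*} [NormedAddCommGroup X] [NormedSpace ℝ X]
    (x : X) (hx : ‖x‖ = 1) (l : ℝ) (hl : l ∈ Set.Ioo (0 : ℝ) 1)
    (xs ys : ℕ → X) (t : ℕ → ℝ)
    (hxs : ∀ n, xs n = x)
    (hys : ∀ n, ys n = if Even n then 0 else x)
    (ht : ∀ n, t n = l) :
    Filter.limsup (fun n => ‖xs n‖) Filter.atTop = 1 ∧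
    Filter.limsup (fun n => ‖ys n‖) Filter.atTop = 1 ∧
    Filter.limsup (fun n => ‖t n • xs n + (1 - t n) • ys n‖) Filter.atTop = 1 ∧
    ¬ Filter.Tendsto (fun n => ‖xs n - ys n‖) Filter.atTop (nhds 0) := by
  obtain ⟨hl0, hl1⟩ := hl
  refine ⟨?_, ?_, ?_, ?_⟩
  · apply limsup_eq_one_aux <;> intro n <;> simp [hxs, hx]
  · apply limsup_eq_one_aux <;> intro n
    · rw [hys]; split <;> simp [hx]
    · rw [hys]
      have : ¬ Even (2 * n + 1) := by simp [Nat.even_add_one, parity_simps]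
      simp [this, hx]
  · apply limsup_eq_one_aux <;> intro n
    · rw [hxs, hys, ht]
      split
      · simp only [smul_zero, add_zero, norm_smul, hx, mul_one, Real.norm_eq_abs,
          abs_of_pos hl0]
        linarith
      · rw [← add_smul]
        simp [norm_smul, hx]
    · rw [hxs, hys, ht]
      have : ¬ Even (2 * n + 1) := by simp [Nat.even_add_one, parity_simps]
      rw [if_neg this, ← add_smul]
      simp [norm_smul, hx]
  · intro h
    have h1 : Filter.Tendsto (fun n => ‖xs (2 * n) - ys (2 * n)‖) Filter.atTop (nhds 0) :=
      h.comp (Filter.tendsto_atTop_mono (fun n => Nat.le_mul_of_pos_left n two_pos)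
        Filter.tendsto_id)
    have h2 : ∀ n, ‖xs (2 * n) - ys (2 * n)‖ = 1 := by
      intro n
      simp [hxs, hys, hx]
    rw [Filter.tendsto_congr h2] at h1
    have := tendsto_nhds_unique h1 tendsto_const_nhds
    norm_num at this
end

section
/- There exist real numbers a ≥ 0 and b, c with 0 < b ≤ c < 1, a sequence (t_n) with t_n ∈ [b, c] for all n, and sequences (x_n), (y_n) of real numbers such that limsup_{n→∞} |x_n| ≤ a, limsup_{n→∞} |y_n| ≤ a, limsup_{n→∞} |t_n x_n + (1 − t_n) y_n| = a, and yet |x_n − y_n| does not tend to 0 as n → ∞. (Since ℝ with the absolute value is a uniformly convex Banach space, the variant of Schu's lemma in which the limit in the third hypothesis is replaced by a limsup is false.) -/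
open Filter

private lemma aux_bdd (f : ℕ → ℝ) (hf : ∀ n, 0 ≤ f n) :
    IsCoboundedUnder (· ≤ ·) atTop f :=
  isCoboundedUnder_le_of_eventually_le atTop (Eventually.of_forall hf)

/-- The variant of Schu's lemma in which the `lim` in the third hypothesis is
replaced by `limsup` fails even in `ℝ`. -/
theorem counterexample_limsup_version :
    ∃ (a b c : ℝ) (t x y : ℕ → ℝ), 0 ≤ a ∧ 0 < b ∧ b ≤ c ∧ c < 1 ∧
      (∀ n, t n ∈ Set.Icc b c) ∧
      Filter.limsup (fun n => |x n|) Filter.atTop ≤ a ∧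
      Filter.limsup (fun n => |y n|) Filter.atTop ≤ a ∧
      Filter.limsup (fun n => |t n * x n + (1 - t n) * y n|) Filter.atTop = a ∧
      ¬ Filter.Tendsto (fun n => |x n - y n|) Filter.atTop (nhds 0) := by
  refine ⟨1, 1/2, 1/2, fun _ => 1/2, fun _ => 1,
    fun n => if Even n then 0 else 1, zero_le_one, by norm_num, le_rfl,
    by norm_num, fun n => ⟨le_rfl, le_rfl⟩, ?_, ?_, ?_, ?_⟩
  · simp
  · apply Filter.limsup_le_of_le (aux_bdd _ fun n => abs_nonneg _)
    refine Eventually.of_forall fun n => ?_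
    by_cases h : Even n
    · simp [h]
    · simp [h]
  · apply le_antisymm
    · apply Filter.limsup_le_of_le (aux_bdd _ fun n => abs_nonneg _)
      refine Eventually.of_forall fun n => ?_
      by_cases h : Even n
      · simp [h]; norm_num
      · simp [h]
    · apply Filter.le_limsup_of_frequently_le
      · apply Filter.frequently_atTop.2
        intro n
        refine ⟨2*n+1, by omega, ?_⟩
        have h : ¬ Even (2*n+1) := by simp [Nat.even_add_one, parity_simps]
        simp [h]
      · refine ⟨1, eventually_map.2 (Eventually.of_forall fun n => ?_)⟩
        by_cases h : Even n
        · simp [h]; norm_num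
        · simp [h]
  · intro h
    have he : ∀ᶠ n in atTop,
        |(fun n => (1:ℝ) - (if Even n then 0 else 1)) n| < 1/2 :=
      h.eventually (eventually_lt_nhds (by norm_num : (0:ℝ) < 1/2))
    have hf : ∃ᶠ n in atTop, Even n :=
      Filter.frequently_atTop.2 fun n => ⟨2*n, by omega, even_two_mul n⟩
    obtain ⟨n, h1, h2⟩ := (he.and_frequently hf).exists
    simp [h2] at h1
    norm_num at h1
end
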